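/- arXiv:1303.4859 — 6 statements merged into one kernel-verified Lean document; each statement's English description precedes it below -/
import Mathlib

section
/- Let γ > 0, let (Ω, F, P) be a probability space, and let H be a family of real-valued random variables on Ω such that the family {e^{γX} : X ∈ H} is uniformly integrable. Then there exists a continuously differentiable function k : [0,∞) → [0,∞) with k(0) = γ, k'(x) > 0 for all x ≥ 0, and k(x) → +∞ as x → +∞, such that sup_{X ∈ H} E[K(X⁺)] < +∞, where K(x) = ∫₀ˣ k(t) e^{γt} dt and X⁺ = max(X,0). -/
open MeasureTheory Set Filter
open scoped NNReal ENNReal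
open Real

noncomputable section
namespace Stmt1Aux

lemma glue_le_one (x : ℝ) : expNegInvGlue x ≤ 1 := by
  unfold expNegInvGlue
  split_ifs with h
  · norm_num
  · exact Real.exp_le_one_iff.2 (by simp [le_of_lt (not_le.1 h)])

lemma glue_mono : Monotone expNegInvGlue := by
  intro x y hxy
  unfold expNegInvGlue
  split_ifs with hx hy hy
  · rfl
  · exact (Real.exp_pos _).le
  · exact absurd (hxy.trans hy) hx
  · exact Real.exp_le_exp.2 (by
      have hx' : 0 < x := not_le.1 hx
      have hy' : 0 < y := not_le.1 hy
      simp only [neg_le_neg_iff]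
      exact inv_anti₀ hx' hxy)

lemma mono_deriv_nonneg {f : ℝ → ℝ} (hm : Monotone f) {x d : ℝ}
    (h : HasDerivAt f d x) : 0 ≤ d := by
  refine ge_of_tendsto (hasDerivAt_iff_tendsto_slope.1 h) ?_
  filter_upwards [self_mem_nhdsWithin] with y (hy : y ≠ x)
  rw [slope_def_field]
  rcases lt_or_gt_of_ne hy with h1 | h1
  · exact div_nonneg_of_nonpos (sub_nonpos.2 (hm h1.le)) (sub_nonpos.2 h1.le)
  · exact div_nonneg (sub_nonneg.2 (hm h1.le)) (sub_nonneg.2 h1.le)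


/-- The slowly-growing smooth staircase. -/
def F (a : ℕ → ℝ) (t : ℝ) : ℝ := ∑' n, expNegInvGlue (t - a n)

variable {a : ℕ → ℝ} (ha1 : ∀ n : ℕ, (n : ℝ) + 1 ≤ a n) (hamono : Monotone a)

include ha1 in
lemma summable_F (t : ℝ) : Summable (fun n => expNegInvGlue (t - a n)) := by
  refine summable_of_ne_finset_zero (s := Finset.range ⌈t⌉₊) (fun n hn => ?_)
  have hn' : (⌈t⌉₊ : ℝ) ≤ n := by exact_mod_cast Nat.le_of_not_lt (fun h => hn (Finset.mem_range.2 h))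
  have : t ≤ a n := le_trans (Nat.le_ceil t) (le_trans (by linarith) (ha1 n))
  exact expNegInvGlue.zero_of_nonpos (by linarith)

include hamono in
lemma F_eq_sum {M : ℕ} {t : ℝ} (ht : t < a M) :
    F a t = ∑ n ∈ Finset.range M, expNegInvGlue (t - a n) := by
  refine tsum_eq_sum (fun n hn => ?_)
  have : M ≤ n := Nat.le_of_not_lt (fun h => hn (Finset.mem_range.2 h))
  exact expNegInvGlue.zero_of_nonpos (by have := hamono this; linarith)

lemma gM_contDiff (M : ℕ) :
    ContDiff ℝ ((⊤ : ℕ∞) : WithTop ℕ∞) (fun t => ∑ n ∈ Finset.range M, expNegInvGlue (t - a n)) := by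
  apply ContDiff.sum (fun n _ => ?_)
  have h1 : ContDiff ℝ ((⊤ : ℕ∞) : WithTop ℕ∞) (fun x : ℝ => x - a n) := contDiff_id.sub contDiff_const
  exact expNegInvGlue.contDiff.comp h1

include ha1 hamono in
lemma F_eventuallyEq (x : ℝ) :
    ∃ M : ℕ, F a =ᶠ[nhds x] (fun t => ∑ n ∈ Finset.range M, expNegInvGlue (t - a n)) := by
  refine ⟨⌈x⌉₊, ?_⟩
  have hx : x < a ⌈x⌉₊ := lt_of_le_of_lt (Nat.le_ceil x) (by linarith [ha1 ⌈x⌉₊])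
  filter_upwards [Iio_mem_nhds hx] with t ht
  exact F_eq_sum hamono ht

include ha1 hamono in
lemma F_contDiffAt (x : ℝ) : ContDiffAt ℝ ((⊤ : ℕ∞) : WithTop ℕ∞) (F a) x := by
  obtain ⟨M, hM⟩ := F_eventuallyEq ha1 hamono x
  exact ((gM_contDiff M).contDiffAt).congr_of_eventuallyEq hM

omit ha1 in
lemma F_nonneg (t : ℝ) : 0 ≤ F a t :=
  tsum_nonneg (fun n => expNegInvGlue.nonneg _)

include ha1 in
lemma F_monotone : Monotone (F a) := by
  intro s t hst
  exact Summable.tsum_le_tsum (fun n => glue_mono (by linarith)) (summable_F ha1 s) (summable_F ha1 t)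

include ha1 in
lemma F_zero : F a 0 = 0 := by
  have : ∀ n, expNegInvGlue (0 - a n) = 0 := fun n =>
    expNegInvGlue.zero_of_nonpos (by linarith [ha1 n, Nat.cast_nonneg (α := ℝ) n])
  simp only [F, zero_sub] at this ⊢
  rw [tsum_congr this, tsum_zero]

include ha1 hamono in
lemma F_tendsto : Tendsto (F a) atTop atTop := by
  rw [tendsto_atTop]
  intro b
  obtain ⟨M, hM⟩ := exists_nat_ge (b / expNegInvGlue 1)
  have hσ1 : 0 < expNegInvGlue 1 := expNegInvGlue.pos_of_pos one_pos
  have hbM : b ≤ M * expNegInvGlue 1 := by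
    rw [div_le_iff₀ hσ1] at hM; exact hM
  filter_upwards [eventually_ge_atTop (a M + 1)] with t ht
  have h1 : ∀ n ∈ Finset.range M, expNegInvGlue 1 ≤ expNegInvGlue (t - a n) := by
    intro n hn
    apply glue_mono
    have := hamono (Nat.le_of_lt (Finset.mem_range.1 hn))
    linarith
  calc b ≤ M * expNegInvGlue 1 := hbM
    _ = ∑ n ∈ Finset.range M, expNegInvGlue 1 := by
        rw [Finset.sum_const, Finset.card_range, nsmul_eq_mul]
    _ ≤ ∑ n ∈ Finset.range M, expNegInvGlue (t - a n) := Finset.sum_le_sum h1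
    _ ≤ F a t := Summable.sum_le_tsum _ (fun n _ => expNegInvGlue.nonneg _) (summable_F ha1 t)

include ha1 hamono in
lemma F_le_card {x t : ℝ} (hx : 0 ≤ x) (ht : t ≤ x) :
    F a t ≤ ((Finset.range ⌈x⌉₊).filter (fun n => a n ≤ x)).card := by
  have hxa : t < a ⌈x⌉₊ := lt_of_le_of_lt (ht.trans (Nat.le_ceil x)) (by linarith [ha1 ⌈x⌉₊])
  rw [F_eq_sum hamono hxa]
  calc ∑ n ∈ Finset.range ⌈x⌉₊, expNegInvGlue (t - a n)
      ≤ ∑ n ∈ Finset.range ⌈x⌉₊, (if a n ≤ x then (1:ℝ) else 0) := by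
        refine Finset.sum_le_sum (fun n _ => ?_)
        split_ifs with h
        · exact glue_le_one _
        · exact le_of_eq (expNegInvGlue.zero_of_nonpos (by push_neg at h; linarith))
    _ = ((Finset.range ⌈x⌉₊).filter (fun n => a n ≤ x)).card := by
        rw [Finset.sum_ite, Finset.sum_const, Finset.sum_const]; simp

/-- The function `k`. -/
def kf (γ : ℝ) (a : ℕ → ℝ) (t : ℝ) : ℝ := γ + (1 - Real.exp (-t)) + F a t

lemma base_contDiff : ContDiff ℝ ((⊤ : ℕ∞) : WithTop ℕ∞) (fun t : ℝ => Real.exp (-t)) := by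
  have h1 : ContDiff ℝ ((⊤ : ℕ∞) : WithTop ℕ∞) (fun t : ℝ => -t) := contDiff_neg
  exact Real.contDiff_exp.comp h1

include ha1 hamono in
lemma kf_contDiffAt (γ : ℝ) (x : ℝ) : ContDiffAt ℝ ((⊤ : ℕ∞) : WithTop ℕ∞) (kf γ a) x := by
  unfold kf
  exact (contDiffAt_const.add (contDiffAt_const.sub base_contDiff.contDiffAt)).add
    (F_contDiffAt ha1 hamono x)

include ha1 in
lemma kf_zero (γ : ℝ) : kf γ a 0 = γ := by
  simp [kf, F_zero ha1]

omit ha1 in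
include ha1 in
lemma kf_nonneg {γ : ℝ} (hγ : 0 ≤ γ) {x : ℝ} (hx : 0 ≤ x) : 0 ≤ kf γ a x := by
  have h1 : Real.exp (-x) ≤ 1 := Real.exp_le_one_iff.2 (by linarith)
  have h2 := F_nonneg (a := a) x
  unfold kf; linarith

include ha1 in
lemma kf_monotone (γ : ℝ) : Monotone (kf γ a) := by
  intro s t hst
  have h1 : Real.exp (-t) ≤ Real.exp (-s) := Real.exp_le_exp.2 (by linarith)
  have h2 := F_monotone ha1 hst
  unfold kf; linarith

lemma base_hasDerivAt (γ x : ℝ) :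
    HasDerivAt (fun t : ℝ => γ + (1 - Real.exp (-t))) (Real.exp (-x)) x := by
  have h1 : HasDerivAt (fun t : ℝ => -t) (-1) x := (hasDerivAt_id x).neg
  have h2 : HasDerivAt (fun t : ℝ => Real.exp (-t)) (Real.exp (-x) * -1) x :=
    (Real.hasDerivAt_exp (-x)).comp x h1
  have h3 := (h2.const_sub 1).const_add γ
  simpa using h3

include ha1 hamono in
lemma kf_hasDerivAt (γ x : ℝ) :
    HasDerivAt (kf γ a) (Real.exp (-x) + deriv (F a) x) x := by
  have hF : DifferentiableAt ℝ (F a) x :=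
    (F_contDiffAt ha1 hamono x).differentiableAt (by simp)
  exact (base_hasDerivAt γ x).add hF.hasDerivAt

include ha1 hamono in
lemma kf_derivWithin_pos (γ : ℝ) {x : ℝ} (hx : 0 ≤ x) :
    0 < derivWithin (kf γ a) (Set.Ici 0) x := by
  have hd := kf_hasDerivAt ha1 hamono γ x
  have hF : DifferentiableAt ℝ (F a) x :=
    (F_contDiffAt ha1 hamono x).differentiableAt (by simp)
  have hFpos : 0 ≤ deriv (F a) x := mono_deriv_nonneg (F_monotone ha1) hF.hasDerivAt
  rw [hd.differentiableAt.derivWithin (uniqueDiffOn_Ici 0 x hx), hd.deriv]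
  positivity

include ha1 hamono in
lemma kf_tendsto {γ : ℝ} (hγ : 0 ≤ γ) : Tendsto (kf γ a) atTop atTop := by
  refine tendsto_atTop_mono' atTop ?_ (F_tendsto ha1 hamono)
  filter_upwards [eventually_ge_atTop (0:ℝ)] with t ht
  have h1 : Real.exp (-t) ≤ 1 := Real.exp_le_one_iff.2 (by linarith)
  unfold kf; linarith

include ha1 hamono in
lemma kf_contDiffOn (γ : ℝ) : ContDiffOn ℝ 1 (kf γ a) (Set.Ici 0) := by
  intro x _
  exact ((kf_contDiffAt ha1 hamono γ x).of_le (by exact_mod_cast le_top)).contDiffWithinAt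


include ha1 hamono in
lemma kf_continuous (γ : ℝ) : Continuous (kf γ a) :=
  continuous_iff_continuousAt.2 fun x => (kf_contDiffAt ha1 hamono γ x).continuousAt

lemma integral_exp_mul {γ : ℝ} (hγ : 0 < γ) (x : ℝ) :
    ∫ t in (0:ℝ)..x, Real.exp (γ * t) = (Real.exp (γ * x) - 1) / γ := by
  have D : ∀ t : ℝ, HasDerivAt (fun y : ℝ => Real.exp (γ * y) / γ) (Real.exp (γ * t)) t := by
    intro t
    have h1 : HasDerivAt (fun y : ℝ => γ * y) γ t := by
      simpa using (hasDerivAt_id t).const_mul γ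
    have h2 := (Real.hasDerivAt_exp (γ * t)).comp t h1
    have h3 := h2.div_const γ
    simpa [mul_comm, mul_div_assoc, mul_div_cancel_left₀ _ hγ.ne'] using h3
  have hInt : IntervalIntegrable (fun t : ℝ => Real.exp (γ * t)) MeasureTheory.volume 0 x :=
    (Real.continuous_exp.comp (continuous_const.mul continuous_id)).intervalIntegrable 0 x
  have heq := intervalIntegral.integral_eq_sub_of_hasDerivAt (a := (0:ℝ)) (b := x)
    (f := fun y : ℝ => Real.exp (γ * y) / γ) (fun t _ => D t) hInt
  rw [heq]
  rw [mul_zero, Real.exp_zero, sub_div]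

include ha1 hamono in
lemma integral_bound {γ : ℝ} (hγ : 0 < γ) {x : ℝ} (hx : 0 ≤ x) :
    ∫ t in (0:ℝ)..x, kf γ a t * Real.exp (γ * t)
      ≤ (γ + 1 + (((Finset.range ⌈x⌉₊).filter (fun n => a n ≤ x)).card : ℝ))
          * Real.exp (γ * x) / γ := by
  set N : ℝ := (((Finset.range ⌈x⌉₊).filter (fun n => a n ≤ x)).card : ℝ) with hN
  have hexp_cont : Continuous (fun t : ℝ => Real.exp (γ * t)) :=
    Real.continuous_exp.comp (continuous_const.mul continuous_id)
  have h1 : ∫ t in (0:ℝ)..x, kf γ a t * Real.exp (γ * t)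
      ≤ ∫ t in (0:ℝ)..x, (γ + 1 + N) * Real.exp (γ * t) := by
    refine intervalIntegral.integral_mono_on hx
      (((kf_continuous ha1 hamono γ).mul hexp_cont).intervalIntegrable _ _)
      ((continuous_const.mul hexp_cont).intervalIntegrable _ _) (fun t ht => ?_)
    have hkt : kf γ a t ≤ γ + 1 + N := by
      have hF := F_le_card ha1 hamono hx ht.2
      have he : 0 ≤ Real.exp (-t) := (Real.exp_pos _).le
      unfold kf; rw [hN]; linarith
    exact mul_le_mul_of_nonneg_right hkt (Real.exp_pos _).le
  have hN0 : 0 ≤ N := by rw [hN]; positivity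
  have h2 : ∫ t in (0:ℝ)..x, (γ + 1 + N) * Real.exp (γ * t)
      = (γ + 1 + N) * ((Real.exp (γ * x) - 1) / γ) := by
    rw [intervalIntegral.integral_const_mul, integral_exp_mul hγ]
  rw [h2] at h1
  refine h1.trans ?_
  rw [mul_div_assoc]
  have h3 : (Real.exp (γ * x) - 1) / γ ≤ Real.exp (γ * x) / γ :=
    (div_le_div_iff_of_pos_right hγ).2 (by linarith)
  exact mul_le_mul_of_nonneg_left h3 (by linarith)

end Stmt1Aux

open Stmt1Aux in
/-- If the family `{e^{γ X} : X ∈ H}` is uniformly integrable, then there exists a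
continuously differentiable function `k : [0,∞) → [0,∞)` with `k 0 = γ`, `k' > 0` on `[0,∞)`
and `k x → +∞`, such that `sup_{X ∈ H} E[K(X⁺)] < ∞`, where `K x = ∫₀ˣ k t · e^{γ t} dt`. -/
theorem stmt_1 {Ω : Type*} [MeasurableSpace Ω] (P : Measure Ω) [IsProbabilityMeasure P]
    (γ : ℝ) (hγ : 0 < γ)
    (H : Set (Ω → ℝ)) (hHmeas : ∀ X ∈ H, Measurable X)
    (hUI : UniformIntegrable (fun X : H => fun ω => Real.exp (γ * (X : Ω → ℝ) ω)) 1 P) :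
    ∃ k : ℝ → ℝ,
      ContDiffOn ℝ 1 k (Set.Ici 0) ∧
      k 0 = γ ∧
      (∀ x : ℝ, 0 ≤ x → 0 < derivWithin k (Set.Ici 0) x) ∧
      (∀ x : ℝ, 0 ≤ x → 0 ≤ k x) ∧
      Tendsto k atTop atTop ∧
      ∃ C : ℝ, ∀ X ∈ H,
        (∫⁻ ω, ENNReal.ofReal (∫ t in (0:ℝ)..(max (X ω) 0), k t * Real.exp (γ * t)) ∂P)
          ≤ ENNReal.ofReal C := by
  classical
  have hspec : ∀ n : ℕ, ∃ C : ℝ≥0, ∀ i : H,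
      eLpNorm ({x | C ≤ ‖Real.exp (γ * (i : Ω → ℝ) x)‖₊}.indicator
        (fun ω => Real.exp (γ * (i : Ω → ℝ) ω))) 1 P ≤ ENNReal.ofReal ((1/2 : ℝ)^n) :=
    fun n => hUI.spec one_ne_zero ENNReal.one_ne_top (by positivity)
  choose Cs hCs using hspec
  set L : ℕ → ℝ := fun n => max (Real.log (Cs n)) 0 / γ with hLdef
  have hL0 : ∀ n, 0 ≤ L n := fun n => div_nonneg (le_max_right _ _) hγ.le
  set a : ℕ → ℝ := fun n => ((n : ℝ) + 1) + ∑ i ∈ Finset.range (n+1), L i with hadef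
  have ha1 : ∀ n : ℕ, (n : ℝ) + 1 ≤ a n := fun n =>
    le_add_of_nonneg_right (Finset.sum_nonneg fun i _ => hL0 i)
  have hamono : Monotone a := by
    intro n m hnm
    have h1 : ((n : ℝ) + 1) ≤ ((m : ℝ) + 1) := by exact_mod_cast by omega
    have h2 : ∑ i ∈ Finset.range (n+1), L i ≤ ∑ i ∈ Finset.range (m+1), L i :=
      Finset.sum_le_sum_of_subset_of_nonneg
        (Finset.range_subset_range.2 (by omega)) (fun i _ _ => hL0 i)
    simp only [hadef]
    linarith
  have haL : ∀ n, L n ≤ a n := by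
    intro n
    have h1 : L n ≤ ∑ i ∈ Finset.range (n+1), L i :=
      Finset.single_le_sum (fun i _ => hL0 i) (Finset.self_mem_range_succ n)
    have h2 : (0:ℝ) ≤ (n : ℝ) + 1 := by positivity
    simp only [hadef]; linarith
  have hkey : ∀ (n : ℕ) (X : Ω → ℝ) (ω : Ω), a n ≤ X ω → (Cs n : ℝ) ≤ Real.exp (γ * X ω) := by
    intro n X ω h
    rcases eq_or_lt_of_le (Cs n).coe_nonneg with h0 | h0
    · exact le_trans h0.ge (Real.exp_pos _).le
    · have h1 : Real.log (Cs n) ≤ γ * X ω := by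
        have h2 : Real.log (Cs n) ≤ γ * L n := by
          rw [hLdef]
          rw [mul_div_cancel₀ _ hγ.ne']
          exact le_max_left _ _
        have h3 : γ * L n ≤ γ * a n := mul_le_mul_of_nonneg_left (haL n) hγ.le
        have h4 : γ * a n ≤ γ * X ω := mul_le_mul_of_nonneg_left h hγ.le
        linarith
      calc (Cs n : ℝ) = Real.exp (Real.log (Cs n)) := (Real.exp_log h0).symm
        _ ≤ Real.exp (γ * X ω) := Real.exp_le_exp.2 h1
  obtain ⟨M₀, hM₀⟩ := hUI.2.2
  refine ⟨kf γ a, kf_contDiffOn ha1 hamono γ, kf_zero ha1 γ,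
    fun x hx => kf_derivWithin_pos ha1 hamono γ hx,
    fun x hx => kf_nonneg ha1 hγ.le hx, kf_tendsto ha1 hamono hγ.le,
    (γ+1)/γ * (1 + (M₀ : ℝ)) + γ⁻¹ * 2, ?_⟩
  intro X hX
  have hXm : Measurable X := hHmeas X hX
  have hgm : Measurable (fun ω => Real.exp (γ * X ω)) := (hXm.const_mul γ).exp
  set c : ℕ → Ω → ℝ := fun n ω => if a n ≤ X ω then Real.exp (γ * X ω) / γ else 0 with hcdef
  have hc_nonneg : ∀ n ω, 0 ≤ c n ω := by
    intro n ω; rw [hcdef]; dsimp only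
    split_ifs
    · positivity
    · exact le_rfl
  have hc_summable : ∀ ω, Summable (fun n => c n ω) := by
    intro ω
    refine summable_of_ne_finset_zero (s := Finset.range ⌈X ω⌉₊) (fun n hn => ?_)
    have hn' : (⌈X ω⌉₊ : ℝ) ≤ n := by
      exact_mod_cast Nat.le_of_not_lt (fun h => hn (Finset.mem_range.2 h))
    have : X ω < a n := by
      have := ha1 n
      have := Nat.le_ceil (X ω)
      linarith
    rw [hcdef]; dsimp only; rw [if_neg (by linarith)]
  -- pointwise bound
  have hpoint : ∀ ω, ∫ t in (0:ℝ)..(max (X ω) 0), kf γ a t * Real.exp (γ * t)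
      ≤ (γ+1)/γ * Real.exp (γ * max (X ω) 0) + ∑' n, c n ω := by
    intro ω
    set x := max (X ω) 0 with hxdef
    have hx : 0 ≤ x := le_max_right _ _
    have h1 := integral_bound ha1 hamono hγ hx
    set s := (Finset.range ⌈x⌉₊).filter (fun n => a n ≤ x) with hs
    have h2 : (s.card : ℝ) * Real.exp (γ * x) / γ ≤ ∑' n, c n ω := by
      have hceq : ∀ n ∈ s, c n ω = Real.exp (γ * x) / γ := by
        intro n hn
        have han : a n ≤ x := by
          have := (Finset.mem_filter.1 hn).2
          exact this
        have hax : (0:ℝ) < a n := lt_of_lt_of_le (by positivity) (ha1 n)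
        have hxpos : (0:ℝ) < x := lt_of_lt_of_le hax han
        have hXx : x = X ω := by
          rcases max_cases (X ω) 0 with ⟨h, _⟩ | ⟨h, _⟩
          · rw [hxdef, h]
          · rw [hxdef] at hxpos; rw [h] at hxpos; exact absurd hxpos (lt_irrefl _)
        rw [hcdef]; dsimp only; rw [if_pos (hXx ▸ han), ← hXx]
      calc (s.card : ℝ) * Real.exp (γ * x) / γ
          = ∑ _n ∈ s, Real.exp (γ * x) / γ := by
            rw [Finset.sum_const, nsmul_eq_mul, mul_div_assoc]
        _ = ∑ n ∈ s, c n ω := (Finset.sum_congr rfl hceq).symm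
        _ ≤ ∑' n, c n ω := Summable.sum_le_tsum s (fun n _ => hc_nonneg n ω) (hc_summable ω)
    have h3 : (γ + 1 + (s.card : ℝ)) * Real.exp (γ * x) / γ
        = (γ+1)/γ * Real.exp (γ * x) + (s.card : ℝ) * Real.exp (γ * x) / γ := by ring
    rw [h3] at h1
    exact h1.trans (by linarith)
  -- measurability facts
  have hmeas1 : Measurable fun ω => ENNReal.ofReal ((γ+1)/γ * Real.exp (γ * max (X ω) 0)) :=
    (((hXm.max measurable_const).const_mul γ).exp.const_mul _).ennreal_ofReal
  have hcmeas : ∀ n, Measurable fun ω => ENNReal.ofReal (c n ω) := fun n =>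
    (Measurable.ite (measurableSet_le measurable_const hXm)
      (hgm.div_const γ) measurable_const).ennreal_ofReal
  -- bound term 1
  have hT1 : (∫⁻ ω, ENNReal.ofReal ((γ+1)/γ * Real.exp (γ * max (X ω) 0)) ∂P)
      ≤ ENNReal.ofReal ((γ+1)/γ) * (1 + (M₀ : ℝ≥0∞)) := by
    have hpt : ∀ ω, ENNReal.ofReal ((γ+1)/γ * Real.exp (γ * max (X ω) 0))
        ≤ ENNReal.ofReal ((γ+1)/γ) * (1 + ENNReal.ofReal (Real.exp (γ * X ω))) := by
      intro ω
      rw [ENNReal.ofReal_mul (by positivity)]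
      refine mul_le_mul_right ?_ _
      have hb : Real.exp (γ * max (X ω) 0) ≤ 1 + Real.exp (γ * X ω) := by
        rcases max_cases (X ω) 0 with ⟨h, _⟩ | ⟨h, _⟩
        · rw [h]; linarith [Real.exp_pos (γ * X ω)]
        · rw [h, mul_zero, Real.exp_zero]; linarith [Real.exp_pos (γ * X ω)]
      calc ENNReal.ofReal (Real.exp (γ * max (X ω) 0))
          ≤ ENNReal.ofReal (1 + Real.exp (γ * X ω)) := ENNReal.ofReal_le_ofReal hb
        _ = 1 + ENNReal.ofReal (Real.exp (γ * X ω)) := by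
            rw [ENNReal.ofReal_add one_pos.le (Real.exp_pos _).le, ENNReal.ofReal_one]
    calc (∫⁻ ω, ENNReal.ofReal ((γ+1)/γ * Real.exp (γ * max (X ω) 0)) ∂P)
        ≤ ∫⁻ ω, ENNReal.ofReal ((γ+1)/γ) * (1 + ENNReal.ofReal (Real.exp (γ * X ω))) ∂P :=
          lintegral_mono hpt
      _ = ENNReal.ofReal ((γ+1)/γ) *
            ∫⁻ ω, (1 + ENNReal.ofReal (Real.exp (γ * X ω))) ∂P := by
          rw [lintegral_const_mul (f := fun ω => 1 + ENNReal.ofReal (Real.exp (γ * X ω))) _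
            (measurable_const.add hgm.ennreal_ofReal)]
      _ ≤ ENNReal.ofReal ((γ+1)/γ) * (1 + (M₀ : ℝ≥0∞)) := by
          refine mul_le_mul_right ?_ _
          rw [lintegral_add_left measurable_const, lintegral_const, measure_univ, mul_one]
          refine add_le_add_right ?_ 1
          have heq : (∫⁻ ω, ENNReal.ofReal (Real.exp (γ * X ω)) ∂P)
              = eLpNorm (fun ω => Real.exp (γ * X ω)) 1 P := by
            rw [eLpNorm_one_eq_lintegral_enorm]
            refine lintegral_congr (fun ω => ?_)
            rw [Real.enorm_eq_ofReal (Real.exp_pos _).le]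
          rw [heq]
          exact hM₀ ⟨X, hX⟩
  -- bound term 2
  have hterm : ∀ n, (∫⁻ ω, ENNReal.ofReal (c n ω) ∂P)
      ≤ ENNReal.ofReal γ⁻¹ * ENNReal.ofReal ((1/2:ℝ)^n) := by
    intro n
    set S : Set Ω := {ω | Cs n ≤ ‖Real.exp (γ * X ω)‖₊} with hSdef
    have hSmeas : MeasurableSet S := measurableSet_le measurable_const hgm.nnnorm
    have hsub : ∀ ω, ENNReal.ofReal (c n ω)
        ≤ ENNReal.ofReal γ⁻¹ * S.indicator (fun ω => (‖Real.exp (γ * X ω)‖₊ : ℝ≥0∞)) ω := by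
      intro ω
      by_cases h : a n ≤ X ω
      · have hS : ω ∈ S := by
          rw [hSdef, Set.mem_setOf_eq, ← NNReal.coe_le_coe, coe_nnnorm,
            Real.norm_of_nonneg (Real.exp_pos _).le]
          exact hkey n X ω h
        rw [Set.indicator_of_mem hS, hcdef]; dsimp only; rw [if_pos h]
        rw [div_eq_inv_mul, ENNReal.ofReal_mul (by positivity),
          ← enorm_eq_nnnorm, Real.enorm_eq_ofReal (Real.exp_pos _).le]
      · rw [hcdef]; dsimp only; rw [if_neg h]
        simp
    calc (∫⁻ ω, ENNReal.ofReal (c n ω) ∂P)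
        ≤ ∫⁻ ω, ENNReal.ofReal γ⁻¹ *
            S.indicator (fun ω => (‖Real.exp (γ * X ω)‖₊ : ℝ≥0∞)) ω ∂P := lintegral_mono hsub
      _ = ENNReal.ofReal γ⁻¹ *
            ∫⁻ ω, S.indicator (fun ω => (‖Real.exp (γ * X ω)‖₊ : ℝ≥0∞)) ω ∂P := by
          rw [lintegral_const_mul _ ((hgm.nnnorm.coe_nnreal_ennreal).indicator hSmeas)]
      _ ≤ ENNReal.ofReal γ⁻¹ * ENNReal.ofReal ((1/2:ℝ)^n) := by
          refine mul_le_mul_right ?_ _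
          have heq : eLpNorm (S.indicator (fun ω => Real.exp (γ * X ω))) 1 P
              = ∫⁻ ω, S.indicator (fun ω => (‖Real.exp (γ * X ω)‖₊ : ℝ≥0∞)) ω ∂P := by
            rw [eLpNorm_one_eq_lintegral_enorm]
            refine lintegral_congr (fun ω => ?_)
            rw [enorm_eq_nnnorm, nnnorm_indicator_eq_indicator_nnnorm]
            by_cases h : ω ∈ S
            · rw [Set.indicator_of_mem h, Set.indicator_of_mem h]
            · rw [Set.indicator_of_notMem h, Set.indicator_of_notMem h]
              simp
          rw [← heq]
          exact hCs n ⟨X, hX⟩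
  have hT2 : (∫⁻ ω, ENNReal.ofReal (∑' n, c n ω) ∂P) ≤ ENNReal.ofReal γ⁻¹ * 2 := by
    have heq1 : (∫⁻ ω, ENNReal.ofReal (∑' n, c n ω) ∂P)
        = ∑' n, ∫⁻ ω, ENNReal.ofReal (c n ω) ∂P := by
      rw [← lintegral_tsum (fun n => (hcmeas n).aemeasurable)]
      refine lintegral_congr (fun ω => ?_)
      exact ENNReal.ofReal_tsum_of_nonneg (fun n => hc_nonneg n ω) (hc_summable ω)
    rw [heq1]
    calc ∑' n, ∫⁻ ω, ENNReal.ofReal (c n ω) ∂P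
        ≤ ∑' n, ENNReal.ofReal γ⁻¹ * ENNReal.ofReal ((1/2:ℝ)^n) := ENNReal.tsum_le_tsum hterm
      _ = ENNReal.ofReal γ⁻¹ * ∑' n, ENNReal.ofReal ((1/2:ℝ)^n) := ENNReal.tsum_mul_left
      _ ≤ ENNReal.ofReal γ⁻¹ * 2 := by
          refine mul_le_mul_right ?_ _
          have hsum : ∑' n, ENNReal.ofReal ((1/2:ℝ)^n) = ENNReal.ofReal 2 := by
            rw [← ENNReal.ofReal_tsum_of_nonneg (fun n => by positivity)
              (summable_geometric_of_lt_one (by norm_num) (by norm_num))]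
            congr 1
            rw [tsum_geometric_of_lt_one (by norm_num) (by norm_num)]
            norm_num
          rw [hsum]
          rw [show ((2:ℝ≥0∞)) = ENNReal.ofReal 2 by simp]
  -- combine
  calc (∫⁻ ω, ENNReal.ofReal
        (∫ t in (0:ℝ)..(max (X ω) 0), kf γ a t * Real.exp (γ * t)) ∂P)
      ≤ ∫⁻ ω, (ENNReal.ofReal ((γ+1)/γ * Real.exp (γ * max (X ω) 0))
          + ENNReal.ofReal (∑' n, c n ω)) ∂P := by
        refine lintegral_mono (fun ω => ?_)
        exact le_trans (ENNReal.ofReal_le_ofReal (hpoint ω)) ENNReal.ofReal_add_le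
    _ = (∫⁻ ω, ENNReal.ofReal ((γ+1)/γ * Real.exp (γ * max (X ω) 0)) ∂P)
          + ∫⁻ ω, ENNReal.ofReal (∑' n, c n ω) ∂P := lintegral_add_left hmeas1 _
    _ ≤ ENNReal.ofReal ((γ+1)/γ) * (1 + (M₀ : ℝ≥0∞)) + ENNReal.ofReal γ⁻¹ * 2 :=
        add_le_add hT1 hT2
    _ ≤ ENNReal.ofReal ((γ+1)/γ * (1 + (M₀ : ℝ)) + γ⁻¹ * 2) := by
        rw [ENNReal.ofReal_add (by positivity) (by positivity),
          ENNReal.ofReal_mul (by positivity), ENNReal.ofReal_mul (by positivity)]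
        refine add_le_add (mul_le_mul_right ?_ _) (mul_le_mul_right ?_ _)
        · rw [ENNReal.ofReal_add one_pos.le M₀.coe_nonneg, ENNReal.ofReal_one,
            ENNReal.ofReal_coe_nnreal]
        · simp
end
end

section
/- Let γ > 0 and let k : [0,∞) → ℝ be continuously differentiable with k(0) = γ and k'(x) > 0 for all x ≥ 0. Let Ψ'(x) = k(x)(e^{γx} − 1), which is a strictly increasing continuous bijection from [0,∞) onto [0,∞), and let Φ' : [0,∞) → [0,∞) denote its inverse function. Then Φ' is differentiable and for every x ≥ 0 its derivative satisfies Φ''(x) ≤ 1/(γ(x + γ)). -/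
open Set Filter
open scoped Topology

/-- For `γ > 0` and `k` continuously differentiable on `[0,∞)` with `k 0 = γ` and
`k' > 0`, let `Ψ' x = k x (e^{γx} - 1)` (a strictly increasing continuous bijection of `[0,∞)`
onto itself) and let `Φ'` be its inverse. Then `Φ'` is differentiable and its derivative `Φ''`
satisfies `Φ'' x ≤ 1/(γ (x + γ))` for all `x ≥ 0`. -/
theorem stmt_6 (γ : ℝ) (hγ : 0 < γ) (k k' : ℝ → ℝ)
    (hk_deriv : ∀ x ∈ Set.Ici (0:ℝ), HasDerivWithinAt k (k' x) (Set.Ici 0) x)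
    (hk'_cont : ContinuousOn k' (Set.Ici 0))
    (hk_zero : k 0 = γ)
    (hk'_pos : ∀ x : ℝ, 0 ≤ x → 0 < k' x)
    (Ψ' : ℝ → ℝ) (hΨ' : ∀ x : ℝ, Ψ' x = k x * (Real.exp (γ * x) - 1))
    (Φ' : ℝ → ℝ)
    (hΦ'_maps : Set.MapsTo Φ' (Set.Ici 0) (Set.Ici 0))
    (hΦ'_inv : Set.InvOn Φ' Ψ' (Set.Ici 0) (Set.Ici 0)) :
    ∀ x : ℝ, 0 ≤ x →
      DifferentiableWithinAt ℝ Φ' (Set.Ici 0) x ∧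
      derivWithin Φ' (Set.Ici 0) x ≤ 1 / (γ * (x + γ)) := by
  set s : Set ℝ := Set.Ici 0 with hs
  -- continuity and monotonicity of k
  have hkc : ContinuousOn k s := fun y hy => (hk_deriv y hy).continuousWithinAt
  have hkmono : StrictMonoOn k s := by
    apply strictMonoOn_of_deriv_pos (convex_Ici 0) hkc
    intro y hy
    rw [interior_Ici] at hy
    have hys : (0:ℝ) ≤ y := le_of_lt hy
    have : HasDerivAt k (k' y) y :=
      (hk_deriv y hys).hasDerivAt (Ici_mem_nhds hy)
    rw [this.deriv]
    exact hk'_pos y hys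
  have hkge : ∀ y ∈ s, γ ≤ k y := by
    intro y hy
    rcases eq_or_lt_of_le (Set.mem_Ici.1 hy : (0:ℝ) ≤ y) with h | h
    · rw [← h, hk_zero]
    · rw [← hk_zero]; exact (hkmono (Set.mem_Ici.2 (le_refl 0)) hy h).le
  -- derivative of Ψ'
  set D : ℝ → ℝ := fun y => k' y * (Real.exp (γ * y) - 1) + k y * (γ * Real.exp (γ * y)) with hD
  have hΨeq : Ψ' = fun y => k y * (Real.exp (γ * y) - 1) := funext hΨ'
  have hΨD : ∀ y ∈ s, HasDerivWithinAt Ψ' (D y) s y := by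
    intro y hy
    rw [hΨeq]
    have hexp : HasDerivWithinAt (fun z => Real.exp (γ * z) - 1) (γ * Real.exp (γ * y)) s y := by
      have h0 : HasDerivAt (fun z : ℝ => γ * z) γ y := by
        simpa using (hasDerivAt_id y).const_mul γ
      have h1 : HasDerivAt (fun z => Real.exp (γ * z)) (Real.exp (γ * y) * γ) y := h0.exp
      have := (h1.sub_const 1).hasDerivWithinAt (s := s)
      simpa [mul_comm] using this
    exact (hk_deriv y hy).mul hexp
  -- lower bound on D
  have hDlb : ∀ y ∈ s, γ * (Ψ' y + γ) ≤ D y := by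
    intro y hy
    have hE : (1:ℝ) ≤ Real.exp (γ * y) := by
      rw [← Real.exp_zero]
      exact Real.exp_le_exp.2 (mul_nonneg hγ.le hy)
    have hk' := hk'_pos y hy
    have hkg := hkge y hy
    have hDy : D y = k' y * (Real.exp (γ * y) - 1) + k y * (γ * Real.exp (γ * y)) := rfl
    rw [hΨ' y, hDy]
    nlinarith [mul_nonneg hk'.le (by linarith : (0:ℝ) ≤ Real.exp (γ * y) - 1),
      mul_nonneg hγ.le (by linarith : (0:ℝ) ≤ k y - γ),
      mul_nonneg (mul_nonneg hγ.le (by linarith : (0:ℝ) ≤ k y - γ)) (by linarith : (0:ℝ) ≤ Real.exp (γ * y) - 1)]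
  have hΨnonneg : ∀ y ∈ s, 0 ≤ Ψ' y := by
    intro y hy
    rw [hΨ']
    have hE : (1:ℝ) ≤ Real.exp (γ * y) := by
      rw [← Real.exp_zero]; exact Real.exp_le_exp.2 (mul_nonneg hγ.le hy)
    exact mul_nonneg (hγ.le.trans (hkge y hy)) (by linarith)
  have hDpos : ∀ y ∈ s, 0 < D y := by
    intro y hy
    have := hDlb y hy
    nlinarith [hΨnonneg y hy]
  -- Ψ' strictly monotone on s
  have hΨc : ContinuousOn Ψ' s := fun y hy => (hΨD y hy).continuousWithinAt
  have hΨmono : StrictMonoOn Ψ' s := by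
    apply strictMonoOn_of_deriv_pos (convex_Ici 0) hΨc
    intro y hy
    rw [interior_Ici] at hy
    have hys : (0:ℝ) ≤ y := le_of_lt hy
    have : HasDerivAt Ψ' (D y) y := (hΨD y hys).hasDerivAt (Ici_mem_nhds hy)
    rw [this.deriv]
    exact hDpos y hys
  -- Φ' strictly monotone on s, surjective onto s
  have hΦsurj : Set.SurjOn Φ' s s := by
    intro u hu
    exact ⟨Ψ' u, hΨnonneg u hu, hΦ'_inv.1 hu⟩
  have hΦmono : StrictMonoOn Φ' s := by
    intro a ha b hb hab
    rcases lt_trichotomy (Φ' a) (Φ' b) with h | h | h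
    · exact h
    · exfalso
      have : Ψ' (Φ' a) = Ψ' (Φ' b) := by rw [h]
      rw [hΦ'_inv.2 ha, hΦ'_inv.2 hb] at this
      exact absurd this hab.ne
    · exfalso
      have := hΨmono (hΦ'_maps hb) (hΦ'_maps ha) h
      rw [hΦ'_inv.2 ha, hΦ'_inv.2 hb] at this
      exact absurd this (not_lt.2 hab.le)
  -- continuity of Φ' within s
  have hΦcont : ∀ x ∈ s, ContinuousWithinAt Φ' s x := by
    intro x hx
    rcases eq_or_lt_of_le (Set.mem_Ici.1 hx : (0:ℝ) ≤ x) with h | h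
    · -- x = 0 : continuity from the right, and s = Ici x
      rw [← h]
      have hx0 : (0:ℝ) ∈ s := Set.mem_Ici.2 le_rfl
      have h0 : s ∈ 𝓝[≥] (0:ℝ) := self_mem_nhdsWithin
      have hsurj : Set.SurjOn Φ' s (Set.Ioi (Φ' 0)) := by
        intro u hu
        exact hΦsurj (Set.mem_Ici.2 ((hΦ'_maps hx0).trans (le_of_lt hu)))
      exact hΦmono.continuousWithinAt_right_of_surjOn h0 hsurj
    · -- x > 0 : full continuity at x
      have hmem : s ∈ 𝓝 x := Ici_mem_nhds h
      have hΦx_pos : 0 < Φ' x := by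
        rcases eq_or_lt_of_le (Set.mem_Ici.1 (hΦ'_maps hx) : (0:ℝ) ≤ Φ' x) with h2 | h2
        · exfalso
          have : Ψ' (Φ' x) = x := hΦ'_inv.2 hx
          rw [← h2, hΨ' 0] at this
          simp at this
          exact h.ne' this.symm
        · exact h2
      have hfsl : ∀ b < Φ' x, ∃ c ∈ s, Φ' c ∈ Set.Ico b (Φ' x) := by
        intro b hb
        set b' := max b 0 with hb'
        have hb's : b' ∈ s := le_max_right b 0
        have hb'lt : b' < Φ' x := max_lt hb hΦx_pos
        obtain ⟨c, hc, hcb⟩ := hΦsurj hb's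
        exact ⟨c, hc, by rw [hcb]; exact ⟨le_max_left b 0, hb'lt⟩⟩
      have hfsr : ∀ b > Φ' x, ∃ c ∈ s, Φ' c ∈ Set.Ioc (Φ' x) b := by
        intro b hb
        have hbs : b ∈ s := ((hΦ'_maps hx).trans hb.le)
        obtain ⟨c, hc, hcb⟩ := hΦsurj hbs
        exact ⟨c, hc, by rw [hcb]; exact ⟨hb, le_refl b⟩⟩
      exact (hΦmono.continuousAt_of_exists_between hmem hfsl hfsr).continuousWithinAt
  -- main part
  intro x hx
  set b := Φ' x with hb
  have hbs : b ∈ s := hΦ'_maps hx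
  have hΨb : Ψ' b = x := hΦ'_inv.2 hx
  have hDbpos : 0 < D b := hDpos b hbs
  -- tendsto of slopes
  have T1 : Tendsto (slope Ψ' b) (𝓝[s \ {b}] b) (𝓝 (D b)) :=
    hasDerivWithinAt_iff_tendsto_slope.1 (hΨD b hbs)
  have T2 : Tendsto Φ' (𝓝[s \ {x}] x) (𝓝[s \ {b}] b) := by
    rw [tendsto_nhdsWithin_iff]
    constructor
    · exact ((hΦcont x hx).tendsto).mono_left (nhdsWithin_mono x diff_subset)
    · filter_upwards [self_mem_nhdsWithin] with y hy
      refine ⟨hΦ'_maps hy.1, ?_⟩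
      intro hcon
      apply hy.2
      have : Ψ' (Φ' y) = Ψ' b := by rw [hcon]
      rwa [hΦ'_inv.2 hy.1, hΨb] at this
  have T3 : Tendsto (fun y => (slope Ψ' b (Φ' y))⁻¹) (𝓝[s \ {x}] x) (𝓝 (D b)⁻¹) :=
    (T1.comp T2).inv₀ hDbpos.ne'
  have hcongr : ∀ᶠ y in 𝓝[s \ {x}] x, (slope Ψ' b (Φ' y))⁻¹ = slope Φ' x y := by
    filter_upwards [self_mem_nhdsWithin] with y hy
    rw [slope_def_field, slope_def_field, hΦ'_inv.2 hy.1, hΨb, inv_div, hb]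
  have hder : HasDerivWithinAt Φ' (D b)⁻¹ s x :=
    hasDerivWithinAt_iff_tendsto_slope.2 (T3.congr' hcongr)
  refine ⟨hder.differentiableWithinAt, ?_⟩
  rw [hder.derivWithin (uniqueDiffOn_Ici 0 x hx)]
  have hlb : γ * (x + γ) ≤ D b := by
    have := hDlb b hbs
    rwa [hΨb] at this
  have hpos : 0 < γ * (x + γ) := by positivity
  rw [one_div]
  exact inv_anti₀ hpos hlb
end

section
/- Let γ > 0 and let k : [0,∞) → ℝ be continuously differentiable with k(0) = γ and k'(x) > 0 for all x ≥ 0. Let Ψ'(x) = k(x)(e^{γx} − 1), let Φ' : [0,∞) → [0,∞) be the inverse function of Ψ', and let Φ₀'(x) = (1/γ) ln(x/γ + 1). Then the function Λ' = Φ₀' − Φ' is nondecreasing on [0,∞). -/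
open Set Filter

/-- With `γ > 0`, `k` continuously differentiable on `[0,∞)`, `k 0 = γ`, `k' > 0`,
`Ψ' x = k x (e^{γx} - 1)` with inverse `Φ'`, and `Φ₀' x = (1/γ) ln (x/γ + 1)`, the function
`Λ' = Φ₀' - Φ'` is nondecreasing on `[0,∞)`. -/
theorem stmt_7 (γ : ℝ) (hγ : 0 < γ) (k k' : ℝ → ℝ)
    (hk_deriv : ∀ x ∈ Set.Ici (0:ℝ), HasDerivWithinAt k (k' x) (Set.Ici 0) x)
    (hk'_cont : ContinuousOn k' (Set.Ici 0))
    (hk_zero : k 0 = γ)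
    (hk'_pos : ∀ x : ℝ, 0 ≤ x → 0 < k' x)
    (Ψ' : ℝ → ℝ) (hΨ' : ∀ x : ℝ, Ψ' x = k x * (Real.exp (γ * x) - 1))
    (Φ' : ℝ → ℝ)
    (hΦ'_maps : Set.MapsTo Φ' (Set.Ici 0) (Set.Ici 0))
    (hΦ'_inv : Set.InvOn Φ' Ψ' (Set.Ici 0) (Set.Ici 0)) :
    MonotoneOn (fun x : ℝ => (1 / γ) * Real.log (x / γ + 1) - Φ' x) (Set.Ici 0) := by
  -- k is continuous on Ici 0
  have hk_cont : ContinuousOn k (Set.Ici 0) := fun x hx =>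
    (hk_deriv x hx).continuousWithinAt
  -- k ≥ γ on Ici 0
  have hk_mono : StrictMonoOn k (Set.Ici 0) := by
    apply strictMonoOn_of_hasDerivWithinAt_pos (convex_Ici 0) hk_cont
    · intro x hx
      exact (hk_deriv x (interior_subset hx)).mono interior_subset
    · intro x hx
      rw [interior_Ici] at hx
      exact hk'_pos x (le_of_lt hx)
  have hk_ge : ∀ x : ℝ, 0 ≤ x → γ ≤ k x := by
    intro x hx
    rcases eq_or_lt_of_le hx with h | h
    · rw [← h, hk_zero]
    · rw [← hk_zero]; exact (hk_mono (Set.mem_Ici.mpr (le_refl _)) hx h).le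
  -- Ψ' ≥ 0 on Ici 0
  have hΨ'_nonneg : ∀ x : ℝ, 0 ≤ x → 0 ≤ Ψ' x := by
    intro x hx
    rw [hΨ' x]
    have h1 : 0 < k x := lt_of_lt_of_le hγ (hk_ge x hx)
    have h2 : (0:ℝ) ≤ Real.exp (γ * x) - 1 := by
      have : (1:ℝ) ≤ Real.exp (γ * x) := Real.one_le_exp (by positivity)
      linarith
    positivity
  -- Ψ' derivative
  set Ψ'' : ℝ → ℝ := fun x => k' x * (Real.exp (γ * x) - 1) + k x * (γ * Real.exp (γ * x)) with hΨ''def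
  have hΨ'_deriv : ∀ x ∈ Set.Ici (0:ℝ), HasDerivWithinAt Ψ' (Ψ'' x) (Set.Ici 0) x := by
    intro x hx
    have he : HasDerivWithinAt (fun y => Real.exp (γ * y) - 1) (γ * Real.exp (γ * x)) (Set.Ici 0) x := by
      have : HasDerivAt (fun y => Real.exp (γ * y) - 1) (Real.exp (γ * x) * γ) x := by
        have h1 : HasDerivAt (fun y : ℝ => γ * y) γ x := by
          simpa using (hasDerivAt_id x).const_mul γ
        exact ((Real.hasDerivAt_exp (γ * x)).comp x h1).sub_const 1
      simpa [mul_comm] using this.hasDerivWithinAt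
    have := (hk_deriv x hx).mul he
    have heq : (k * fun y => Real.exp (γ * y) - 1) = Ψ' := by
      ext y; rw [Pi.mul_apply, hΨ' y]
    rw [heq] at this
    exact this
  -- Ψ' strictly mono on Ici 0
  have hΨ''_pos : ∀ x : ℝ, 0 ≤ x → 0 < Ψ'' x := by
    intro x hx
    have h1 : 0 < k' x := hk'_pos x hx
    have h2 : (0:ℝ) ≤ Real.exp (γ * x) - 1 := by
      have : (1:ℝ) ≤ Real.exp (γ * x) := Real.one_le_exp (by positivity)
      linarith
    have h3 : 0 < k x := lt_of_lt_of_le hγ (hk_ge x hx)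
    have h4 : 0 < Real.exp (γ * x) := Real.exp_pos _
    have h5 : 0 < k x * (γ * Real.exp (γ * x)) := by positivity
    simp only [hΨ''def]
    nlinarith
  have hΨ'_cont : ContinuousOn Ψ' (Set.Ici 0) := fun x hx => (hΨ'_deriv x hx).continuousWithinAt
  have hΨ'_mono : StrictMonoOn Ψ' (Set.Ici 0) := by
    apply strictMonoOn_of_hasDerivWithinAt_pos (convex_Ici 0) hΨ'_cont
    · intro x hx; exact (hΨ'_deriv x (interior_subset hx)).mono interior_subset
    · intro x hx; rw [interior_Ici] at hx; exact hΨ''_pos x hx.le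
  -- Φ' monotone
  have hΦ'_mono : ∀ x ∈ Set.Ici (0:ℝ), ∀ y ∈ Set.Ici (0:ℝ), x ≤ y → Φ' x ≤ Φ' y := by
    intro x hx y hy hxy
    by_contra h
    push_neg at h
    have := hΨ'_mono (hΦ'_maps hy) (hΦ'_maps hx) h
    rw [hΦ'_inv.2 hx, hΦ'_inv.2 hy] at this
    linarith
  -- The auxiliary function g u = (1/γ) log (Ψ' u / γ + 1) - u is monotone on Ici 0
  set g : ℝ → ℝ := fun u => (1 / γ) * Real.log (Ψ' u / γ + 1) - u with hgdef
  have harg_pos : ∀ u : ℝ, 0 ≤ u → 0 < Ψ' u / γ + 1 := by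
    intro u hu
    have := hΨ'_nonneg u hu
    have : 0 ≤ Ψ' u / γ := by positivity
    linarith
  have hg_deriv : ∀ u ∈ Set.Ici (0:ℝ),
      HasDerivWithinAt g ((1 / γ) * ((Ψ'' u / γ) / (Ψ' u / γ + 1)) - 1) (Set.Ici 0) u := by
    intro u hu
    have h1 : HasDerivWithinAt (fun y => Ψ' y / γ + 1) (Ψ'' u / γ) (Set.Ici 0) u :=
      ((hΨ'_deriv u hu).div_const γ).add_const 1
    have h2 : HasDerivWithinAt (fun y => Real.log (Ψ' y / γ + 1))
        ((Ψ'' u / γ) / (Ψ' u / γ + 1)) (Set.Ici 0) u := by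
      have := (Real.hasDerivAt_log (harg_pos u hu).ne').comp_hasDerivWithinAt u h1
      rw [div_eq_inv_mul (Ψ'' u / γ)]
      have hne : Ψ' u / γ + 1 ≠ 0 := (harg_pos u hu).ne'
      exact this
    simpa [hgdef] using (h2.const_mul (1 / γ)).fun_sub ((hasDerivAt_id' u).hasDerivWithinAt (s := Set.Ici 0))
  have hg_mono : MonotoneOn g (Set.Ici 0) := by
    apply monotoneOn_of_hasDerivWithinAt_nonneg (convex_Ici 0)
      (fun u hu => (hg_deriv u hu).continuousWithinAt)
    · intro u hu
      exact (hg_deriv u (interior_subset hu)).mono interior_subset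
    · intro u hu
      rw [interior_Ici] at hu
      have hu0 : (0:ℝ) ≤ u := hu.le
      -- need (1/γ) * ((Ψ'' u / γ) / (Ψ' u / γ + 1)) ≥ 1, i.e. Ψ'' u ≥ γ * Ψ' u + γ²
      have hkey : γ * Ψ' u + γ ^ 2 ≤ Ψ'' u := by
        simp only [hΨ''def, hΨ' u]
        have h1 : 0 < k' u := hk'_pos u hu0
        have h2 : (0:ℝ) ≤ Real.exp (γ * u) - 1 := by
          have : (1:ℝ) ≤ Real.exp (γ * u) := Real.one_le_exp (by positivity)
          linarith
        have h3 : γ ≤ k u := hk_ge u hu0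
        nlinarith
      have hΨnn := hΨ'_nonneg u hu0
      have hpos2 : 0 < γ * Ψ' u + γ ^ 2 := by positivity
      have hne : Ψ' u + γ ≠ 0 := by positivity
      have h6 : 1 / γ * (Ψ'' u / γ / (Ψ' u / γ + 1)) = Ψ'' u / (γ * Ψ' u + γ ^ 2) := by
        rw [eq_div_iff hpos2.ne']
        have hne2 : Ψ' u / γ + 1 ≠ 0 := by positivity
        field_simp
      rw [sub_nonneg, h6, le_div_iff₀ hpos2, one_mul]
      linarith
  -- conclude
  intro x hx y hy hxy
  have ha : Φ' x ∈ Set.Ici (0:ℝ) := hΦ'_maps hx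
  have hb : Φ' y ∈ Set.Ici (0:ℝ) := hΦ'_maps hy
  have hab : Φ' x ≤ Φ' y := hΦ'_mono x hx y hy hxy
  have := hg_mono ha hb hab
  simp only [hgdef] at this
  rw [hΦ'_inv.2 hx, hΦ'_inv.2 hy] at this
  simpa using this
end

section
/- Let γ > 0 and let k : [0,∞) → ℝ be continuously differentiable with k(0) = γ, k'(x) > 0 for all x ≥ 0, and k(x) → +∞ as x → +∞. Let Ψ'(x) = k(x)(e^{γx} − 1), let Φ' : [0,∞) → [0,∞) be the inverse function of Ψ', and let Φ₀'(x) = (1/γ) ln(x/γ + 1). Then Λ'(x) = Φ₀'(x) − Φ'(x) tends to +∞ as x → +∞. -/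
open Set Filter

/-- With `γ > 0`, `k` continuously differentiable on `[0,∞)`, `k 0 = γ`, `k' > 0`,
`k x → +∞`, `Ψ' x = k x (e^{γx} - 1)` with inverse `Φ'`, and `Φ₀' x = (1/γ) ln (x/γ + 1)`, the
function `Λ' x = Φ₀' x - Φ' x` tends to `+∞` as `x → +∞`. -/
theorem stmt_8 (γ : ℝ) (hγ : 0 < γ) (k k' : ℝ → ℝ)
    (hk_deriv : ∀ x ∈ Set.Ici (0:ℝ), HasDerivWithinAt k (k' x) (Set.Ici 0) x)
    (hk'_cont : ContinuousOn k' (Set.Ici 0))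
    (hk_zero : k 0 = γ)
    (hk'_pos : ∀ x : ℝ, 0 ≤ x → 0 < k' x)
    (hk_top : Tendsto k atTop atTop)
    (Ψ' : ℝ → ℝ) (hΨ' : ∀ x : ℝ, Ψ' x = k x * (Real.exp (γ * x) - 1))
    (Φ' : ℝ → ℝ)
    (hΦ'_maps : Set.MapsTo Φ' (Set.Ici 0) (Set.Ici 0))
    (hΦ'_inv : Set.InvOn Φ' Ψ' (Set.Ici 0) (Set.Ici 0)) :
    Tendsto (fun x : ℝ => (1 / γ) * Real.log (x / γ + 1) - Φ' x) atTop atTop := by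
  -- k is monotone on [0,∞)
  have hk_cont : ContinuousOn k (Set.Ici 0) := fun x hx => (hk_deriv x hx).continuousWithinAt
  have hk_mono : MonotoneOn k (Set.Ici 0) := by
    apply monotoneOn_of_deriv_nonneg (convex_Ici 0) hk_cont
    · intro x hx
      rw [interior_Ici] at hx
      exact ((hk_deriv x (mem_Ici.2 (mem_Ioi.1 hx).le)).hasDerivAt (Ici_mem_nhds hx)).differentiableAt.differentiableWithinAt
    · intro x hx
      rw [interior_Ici] at hx
      have hd : HasDerivAt k (k' x) x := (hk_deriv x (mem_Ici.2 (mem_Ioi.1 hx).le)).hasDerivAt (Ici_mem_nhds hx)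
      rw [hd.deriv]
      exact (hk'_pos x hx.le).le
  have hk_ge : ∀ y : ℝ, 0 ≤ y → γ ≤ k y := by
    intro y hy
    have := hk_mono (self_mem_Ici) hy hy
    rwa [hk_zero] at this
  -- Ψ' is strictly monotone on [0,∞)
  have hΨ_mono : StrictMonoOn Ψ' (Set.Ici 0) := by
    intro a ha b hb hab
    rw [hΨ' a, hΨ' b]
    have h1 : Real.exp (γ * a) - 1 ≥ 0 := by
      have : (1:ℝ) ≤ Real.exp (γ * a) := Real.one_le_exp (mul_nonneg hγ.le ha)
      linarith
    have h2 : Real.exp (γ * a) < Real.exp (γ * b) :=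
      Real.exp_lt_exp.2 (by nlinarith)
    have hkb : 0 < k b := lt_of_lt_of_le hγ (hk_ge b hb)
    have hkab : k a ≤ k b := hk_mono ha hb hab.le
    nlinarith
  rw [tendsto_atTop]
  intro M
  -- choose y₁
  obtain ⟨y₀, hy₀⟩ := eventually_atTop.1 (hk_top.eventually_ge_atTop (2 * γ * Real.exp (γ * M)))
  set y₁ : ℝ := max y₀ (max 0 (Real.log 2 / γ)) with hy₁def
  have hy₁0 : (0:ℝ) ≤ y₁ := le_max_of_le_right (le_max_left _ _)
  have hΨy₁0 : 0 ≤ Ψ' y₁ := by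
    rw [hΨ']
    have h1 : (1:ℝ) ≤ Real.exp (γ * y₁) := Real.one_le_exp (by positivity)
    have := hk_ge y₁ hy₁0
    nlinarith
  rw [eventually_atTop]
  refine ⟨Ψ' y₁, fun x hx => ?_⟩
  have hx0 : (0:ℝ) ≤ x := le_trans hΨy₁0 hx
  set y := Φ' x with hydef
  have hy0 : (0:ℝ) ≤ y := hΦ'_maps (mem_Ici.2 hx0)
  have hxy : Ψ' y = x := hΦ'_inv.2 (mem_Ici.2 hx0)
  have hyy₁ : y₁ ≤ y := by
    by_contra h
    push_neg at h
    have := hΨ_mono (mem_Ici.2 hy0) (mem_Ici.2 hy₁0) h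
    rw [hxy] at this
    exact absurd hx (not_le.2 this)
  -- key facts at y
  have hky : 2 * γ * Real.exp (γ * M) ≤ k y :=
    hy₀ y (le_trans (le_max_left _ _) hyy₁)
  have hexp2 : (2:ℝ) ≤ Real.exp (γ * y) := by
    have hl : Real.log 2 / γ ≤ y := le_trans (le_max_of_le_right (le_max_right _ _)) hyy₁
    have : Real.log 2 ≤ γ * y := by
      rw [div_le_iff₀ hγ] at hl; linarith
    calc (2:ℝ) = Real.exp (Real.log 2) := (Real.exp_log (by norm_num)).symm
      _ ≤ Real.exp (γ * y) := Real.exp_le_exp.2 this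
  -- x ≥ γ exp(γM) exp(γy)
  have hkey : γ * (Real.exp (γ * M) * Real.exp (γ * y)) ≤ x := by
    rw [← hxy, hΨ']
    have h1 : Real.exp (γ * y) / 2 ≤ Real.exp (γ * y) - 1 := by linarith
    have h2 : (0:ℝ) ≤ Real.exp (γ * y) / 2 := by positivity
    have h3 : 2 * γ * Real.exp (γ * M) * (Real.exp (γ * y) / 2) ≤ k y * (Real.exp (γ * y) - 1) :=
      mul_le_mul hky h1 h2 (le_trans (by positivity) hky)
    nlinarith
  -- conclude
  have hpos : (0:ℝ) < x / γ + 1 := by positivity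
  have hlog : γ * (M + y) ≤ Real.log (x / γ + 1) := by
    rw [Real.le_log_iff_exp_le hpos]
    rw [mul_add, Real.exp_add]
    have : Real.exp (γ * M) * Real.exp (γ * y) ≤ x / γ := by
      rw [le_div_iff₀ hγ]; nlinarith
    linarith
  have : M + y ≤ (1 / γ) * Real.log (x / γ + 1) := by
    rw [div_mul_eq_mul_div, le_div_iff₀ hγ, one_mul]; nlinarith
  linarith
end

section
/- Let γ > 0 and let k : [0,∞) → ℝ be continuously differentiable with k(0) = γ, k'(x) > 0 for all x ≥ 0, and k(x) → +∞ as x → +∞. Define Ψ'(x) = k(x)(e^{γx} − 1), let Φ' : [0,∞) → [0,∞) be the inverse function of Ψ', set Φ(x) = ∫₀ˣ Φ'(u) du, set Φ₀(x) = (x/γ + 1) ln(x/γ + 1) − x/γ, and set Λ = Φ₀ − Φ. Then Λ(x)/x → +∞ as x → +∞. -/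
open Set Filter

/-- With `γ > 0`, `k` continuously differentiable on `[0,∞)`, `k 0 = γ`, `k' > 0`,
`k x → +∞`, `Ψ' x = k x (e^{γx} - 1)` with inverse `Φ'`, `Φ x = ∫₀ˣ Φ' u du`,
`Φ₀ x = (x/γ + 1) ln (x/γ + 1) - x/γ` and `Λ = Φ₀ - Φ`, one has `Λ x / x → +∞` as `x → +∞`. -/
theorem stmt_9 (γ : ℝ) (hγ : 0 < γ) (k k' : ℝ → ℝ)
    (hk_deriv : ∀ x ∈ Set.Ici (0:ℝ), HasDerivWithinAt k (k' x) (Set.Ici 0) x)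
    (hk'_cont : ContinuousOn k' (Set.Ici 0))
    (hk_zero : k 0 = γ)
    (hk'_pos : ∀ x : ℝ, 0 ≤ x → 0 < k' x)
    (hk_top : Tendsto k atTop atTop)
    (Ψ' : ℝ → ℝ) (hΨ' : ∀ x : ℝ, Ψ' x = k x * (Real.exp (γ * x) - 1))
    (Φ' : ℝ → ℝ)
    (hΦ'_maps : Set.MapsTo Φ' (Set.Ici 0) (Set.Ici 0))
    (hΦ'_inv : Set.InvOn Φ' Ψ' (Set.Ici 0) (Set.Ici 0))
    (Φ : ℝ → ℝ) (hΦ : ∀ x : ℝ, Φ x = ∫ u in (0:ℝ)..x, Φ' u)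
    (Φ₀ : ℝ → ℝ) (hΦ₀ : ∀ x : ℝ, Φ₀ x = (x / γ + 1) * Real.log (x / γ + 1) - x / γ)
    (Λ : ℝ → ℝ) (hΛ : ∀ x : ℝ, Λ x = Φ₀ x - Φ x) :
    Tendsto (fun x : ℝ => Λ x / x) atTop atTop := by
  have hk_cont : ContinuousOn k (Ici 0) := fun x hx => (hk_deriv x hx).continuousWithinAt
  have hk_mono : StrictMonoOn k (Ici 0) := by
    apply strictMonoOn_of_deriv_pos (convex_Ici 0) hk_cont
    intro x hx
    rw [interior_Ici] at hx
    have hd : HasDerivAt k (k' x) x :=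
      (hk_deriv x (mem_Ici.mpr (le_of_lt hx))).hasDerivAt (Ici_mem_nhds hx)
    rw [hd.deriv]
    exact hk'_pos x (le_of_lt hx)
  have hk_ge : ∀ x, 0 ≤ x → γ ≤ k x := by
    intro x hx
    rcases eq_or_lt_of_le hx with h | h
    · rw [← h, hk_zero]
    · have := hk_mono (mem_Ici.mpr (le_refl (0:ℝ))) (mem_Ici.mpr (le_of_lt h)) h
      rw [hk_zero] at this
      exact le_of_lt this
  have hΨ'_mono : StrictMonoOn Ψ' (Ici 0) := by
    intro a ha b hb hab
    rw [hΨ' a, hΨ' b]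
    have h1 : k a ≤ k b := le_of_lt (hk_mono ha hb hab)
    have h2 : Real.exp (γ*a) - 1 < Real.exp (γ*b) - 1 := by
      have := Real.exp_lt_exp.mpr (mul_lt_mul_of_pos_left hab hγ)
      linarith
    have h3 : 0 ≤ Real.exp (γ*a) - 1 := by
      have hga : (0:ℝ) ≤ γ * a := mul_nonneg (le_of_lt hγ) ha
      have := Real.one_le_exp hga
      linarith
    have h4 : 0 < k b := lt_of_lt_of_le hγ (hk_ge b hb)
    exact mul_lt_mul' h1 h2 h3 h4
  have hΨ'_nonneg : ∀ x, 0 ≤ x → 0 ≤ Ψ' x := by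
    intro x hx
    rw [hΨ' x]
    have h3 : 0 ≤ Real.exp (γ*x) - 1 := by
      have := Real.one_le_exp (mul_nonneg (le_of_lt hγ) hx)
      linarith
    exact mul_nonneg (le_trans (le_of_lt hγ) (hk_ge x hx)) h3
  have hΨΦ : ∀ u, 0 ≤ u → Ψ' (Φ' u) = u := fun u hu => hΦ'_inv.2 hu
  have hΦ'_lb : ∀ A, 0 ≤ A → ∀ u, Ψ' A ≤ u → A ≤ Φ' u := by
    intro A hA u hu
    have hu0 : 0 ≤ u := le_trans (hΨ'_nonneg A hA) hu
    by_contra h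
    push_neg at h
    have := hΨ'_mono (hΦ'_maps hu0) hA h
    rw [hΨΦ u hu0] at this
    linarith
  have hΦ'_monoOn : MonotoneOn Φ' (Ici 0) := by
    intro a ha b hb hab
    by_contra h
    push_neg at h
    have := hΨ'_mono (hΦ'_maps hb) (hΦ'_maps ha) h
    rw [hΨΦ a ha, hΨΦ b hb] at this
    linarith
  set g : ℝ → ℝ := fun u => Real.log (u/γ + 1) / γ with hg
  have hΦ₀_deriv : ∀ u : ℝ, 0 ≤ u → HasDerivAt Φ₀ (g u) u := by
    intro u hu
    have hpos : 0 < u/γ + 1 := by positivity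
    have hne : u/γ + 1 ≠ 0 := ne_of_gt hpos
    have h1 : HasDerivAt (fun y : ℝ => y/γ + 1) (1/γ) u := by
      simpa using ((hasDerivAt_id u).div_const γ).add_const 1
    have h2 : HasDerivAt (fun y : ℝ => Real.log (y/γ+1)) ((1/γ)/(u/γ+1)) u := h1.log hne
    have h3 : HasDerivAt (fun y : ℝ => (y/γ+1) * Real.log (y/γ+1))
        ((1/γ) * Real.log (u/γ+1) + (u/γ+1) * ((1/γ)/(u/γ+1))) u := h1.mul h2
    have hΦ₀eq : Φ₀ = fun y : ℝ => (y/γ+1)*Real.log (y/γ+1) - y/γ := funext hΦ₀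
    have h4 : HasDerivAt Φ₀ ((1/γ)*Real.log (u/γ+1) + (u/γ+1)*((1/γ)/(u/γ+1)) - 1/γ) u := by
      rw [hΦ₀eq]
      exact h3.sub ((hasDerivAt_id u).div_const γ)
    have hid : Real.log (u/γ+1)/γ = 1/γ*Real.log (u/γ+1) + (u/γ+1)*((1/γ)/(u/γ+1)) - 1/γ := by
      set L := Real.log (u/γ+1)
      field_simp
      ring
    rw [hg]
    dsimp only
    rw [hid]
    exact h4
  have key : ∀ M : ℝ, ∃ U : ℝ, 0 ≤ U ∧ ∀ u, U ≤ u → Φ' u + M ≤ g u := by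
    intro M
    obtain ⟨A₀, hA₀⟩ := eventually_atTop.mp (hk_top.eventually_ge_atTop (2*γ*Real.exp (γ*M)))
    set A := max A₀ (max (Real.log 2 / γ) 0) with hA
    have hA0 : (0:ℝ) ≤ A := le_max_of_le_right (le_max_right _ _)
    refine ⟨Ψ' A, hΨ'_nonneg A hA0, ?_⟩
    intro u hu
    have hxA : A ≤ Φ' u := hΦ'_lb A hA0 u hu
    set x := Φ' u with hx
    have hx0 : 0 ≤ x := le_trans hA0 hxA
    have hu0 : 0 ≤ u := le_trans (hΨ'_nonneg A hA0) hu
    have hux : u = k x * (Real.exp (γ*x) - 1) := by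
      rw [← hΨ' x, hΨΦ u hu0]
    have hkx : 2*γ*Real.exp (γ*M) ≤ k x := hA₀ x (le_trans (le_max_left _ _) hxA)
    have hex : Real.exp (γ*x) / 2 ≤ Real.exp (γ*x) - 1 := by
      have h2 : (2:ℝ) ≤ Real.exp (γ*x) := by
        rw [show (2:ℝ) = Real.exp (Real.log 2) from (Real.exp_log two_pos).symm]
        apply Real.exp_le_exp.mpr
        have hlx : Real.log 2 / γ ≤ x :=
          le_trans (le_trans (le_max_left _ _) (le_max_right A₀ _)) hxA
        rw [div_le_iff₀ hγ] at hlx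
        linarith [hlx]
      linarith
    have hu_lb : γ * Real.exp (γ*(x+M)) ≤ u := by
      have hc : γ * Real.exp (γ*(x+M)) = (2*γ*Real.exp (γ*M)) * (Real.exp (γ*x)/2) := by
        rw [mul_add, Real.exp_add]; ring
      rw [hux, hc]
      exact mul_le_mul hkx hex (by positivity)
        (le_trans (by positivity) hkx)
    have h5 : Real.exp (γ*(x+M)) ≤ u/γ + 1 := by
      have : Real.exp (γ*(x+M)) ≤ u/γ := by
        rw [le_div_iff₀ hγ]
        nlinarith [hu_lb]
      linarith
    have h6 : γ*(x+M) ≤ Real.log (u/γ+1) := by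
      rw [← Real.log_exp (γ*(x+M))]
      exact Real.log_le_log (Real.exp_pos _) h5
    have h7 : x + M ≤ g u := by
      rw [hg]
      dsimp only
      rw [le_div_iff₀ hγ]
      nlinarith [h6]
    linarith [h7]
  rw [tendsto_atTop]
  intro b
  set M := max b 1 with hM
  have hM1 : (1:ℝ) ≤ M := le_max_right _ _
  have hMb : b ≤ M := le_max_left _ _
  have hM0 : (0:ℝ) < M := lt_of_lt_of_le one_pos hM1
  obtain ⟨U, hU0, hU⟩ := key (2*M)
  have hΦ'int : ∀ a c : ℝ, 0 ≤ a → a ≤ c → IntervalIntegrable Φ' MeasureTheory.volume a c := by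
    intro a c ha hac
    apply (hΦ'_monoOn.mono ?_).intervalIntegrable
    rw [uIcc_of_le hac]
    exact fun y hy => le_trans ha hy.1
  have hint : ∀ x, U ≤ x → Λ U + 2*M*(x-U) ≤ Λ x := by
    intro x hx
    have hgint : IntervalIntegrable g MeasureTheory.volume U x := by
      apply ContinuousOn.intervalIntegrable
      intro u hu
      rw [uIcc_of_le hx] at hu
      have h0u : 0 ≤ u := le_trans hU0 hu.1
      have hne : u/γ + 1 ≠ 0 := by positivity
      have : ContinuousAt g u := by
        apply ContinuousAt.div_const
        have hinner : ContinuousAt (fun y : ℝ => y/γ + 1) u := by fun_prop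
        exact hinner.log hne
      exact this.continuousWithinAt
    have hΦ₀id : ∫ u in U..x, g u = Φ₀ x - Φ₀ U := by
      apply intervalIntegral.integral_eq_sub_of_hasDerivAt ?_ hgint
      intro u hu
      rw [uIcc_of_le hx] at hu
      exact hΦ₀_deriv u (le_trans hU0 hu.1)
    have hΦid : Φ x - Φ U = ∫ u in U..x, Φ' u := by
      rw [hΦ x, hΦ U,
        ← intervalIntegral.integral_add_adjacent_intervals (hΦ'int 0 U le_rfl hU0)
          (hΦ'int U x hU0 hx)]
      ring
    have hmono : ∫ _u in U..x, (2*M) ≤ ∫ u in U..x, (g u - Φ' u) := by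
      apply intervalIntegral.integral_mono_on hx intervalIntegrable_const
        (hgint.sub (hΦ'int U x hU0 hx))
      intro u hu
      have := hU u hu.1
      linarith
    rw [intervalIntegral.integral_const,
      intervalIntegral.integral_sub hgint (hΦ'int U x hU0 hx), hΦ₀id, ← hΦid,
      smul_eq_mul] at hmono
    rw [hΛ x, hΛ U]
    linarith [hmono]
  rw [eventually_atTop]
  refine ⟨max (max U 1) ((2*M*U - Λ U)/M), ?_⟩
  intro x hx
  have hx1 : U ≤ x := le_trans (le_trans (le_max_left _ _) (le_max_left _ _)) hx
  have hx2 : (1:ℝ) ≤ x := le_trans (le_trans (le_max_right _ _) (le_max_left _ _)) hx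
  have hx0 : (0:ℝ) < x := lt_of_lt_of_le one_pos hx2
  have hx3 : (2*M*U - Λ U)/M ≤ x := le_trans (le_max_right _ _) hx
  rw [div_le_iff₀ hM0] at hx3
  have h1 : Λ U + 2*M*(x-U) ≤ Λ x := hint x hx1
  rw [le_div_iff₀ hx0]
  nlinarith [h1, hx3, hMb, hM0, hx0]
end

section
/- Let γ > 0, C₁ ≥ 0, and let g : ℝ^d → ℝ satisfy g(0) = 0, 0 ≤ g(z) ≤ C₁ + (γ/2)‖z‖² for all z ∈ ℝ^d. Let z, q ∈ ℝ^d be such that q is a subgradient of g at z, i.e. g(w) − g(z) ≥ ⟨w − z, q⟩ for all w ∈ ℝ^d. Then ‖q‖² ≤ 4γC₁ + 4γ²‖z‖². -/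
open Set Filter
open scoped RealInnerProductSpace

/-- If `g : ℝ^d → ℝ` satisfies `g 0 = 0` and `0 ≤ g w ≤ C₁ + (γ/2)‖w‖²` for all
`w`, and `q` is a subgradient of `g` at `z`, then `‖q‖² ≤ 4γC₁ + 4γ²‖z‖²`. -/
theorem stmt_14 (d : ℕ) (γ C₁ : ℝ) (hγ : 0 < γ) (hC₁ : 0 ≤ C₁)
    (g : EuclideanSpace ℝ (Fin d) → ℝ)
    (hg0 : g 0 = 0)
    (hg_nonneg : ∀ w : EuclideanSpace ℝ (Fin d), 0 ≤ g w)
    (hg_growth : ∀ w : EuclideanSpace ℝ (Fin d), g w ≤ C₁ + γ / 2 * ‖w‖ ^ 2)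
    (z q : EuclideanSpace ℝ (Fin d))
    (hsub : ∀ w : EuclideanSpace ℝ (Fin d), ⟪w - z, q⟫ ≤ g w - g z) :
    ‖q‖ ^ 2 ≤ 4 * γ * C₁ + 4 * γ ^ 2 * ‖z‖ ^ 2 := by
  set t : ℝ := 1 / (2 * γ) with ht
  have htpos : 0 < t := by positivity
  have h1 := hsub (z + t • q)
  have hdiff : z + t • q - z = t • q := by abel
  rw [hdiff, real_inner_smul_left, real_inner_self_eq_norm_sq] at h1
  have hnorm : ‖z + t • q‖ ^ 2 = ‖z‖ ^ 2 + 2 * (t * ⟪z, q⟫) + t ^ 2 * ‖q‖ ^ 2 := by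
    rw [norm_add_sq_real, real_inner_smul_right, norm_smul, Real.norm_eq_abs,
      abs_of_pos htpos, mul_pow]
  have hg := hg_growth (z + t • q)
  rw [hnorm] at hg
  have hz := hg_nonneg z
  have hiq := real_inner_le_norm z q
  have hq0 : (0:ℝ) ≤ ‖q‖ := norm_nonneg _
  have hz0 : (0:ℝ) ≤ ‖z‖ := norm_nonneg _
  have htγ : t * γ = 1 / 2 := by rw [ht]; field_simp
  have ht2 : t ^ 2 * γ ^ 2 = 1 / 4 := by
    have : t ^ 2 * γ ^ 2 = (t * γ) ^ 2 := by ring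
    rw [this, htγ]; norm_num
  have key : t * ‖q‖ ^ 2 ≤ C₁ + γ / 2 * ‖z‖ ^ 2 + γ * t * ⟪z, q⟫ + γ / 2 * t ^ 2 * ‖q‖ ^ 2 := by
    linarith
  have hne : γ ≠ 0 := hγ.ne'
  have key' : 4 * ‖q‖ ^ 2 ≤ 8 * γ * C₁ + 4 * γ ^ 2 * ‖z‖ ^ 2 + 4 * γ * ⟪z, q⟫ + ‖q‖ ^ 2 := by
    have h := mul_le_mul_of_nonneg_left key (by positivity : (0:ℝ) ≤ 8 * γ)
    have a1 : 8 * γ * (t * ‖q‖ ^ 2) = 4 * ‖q‖ ^ 2 := by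
      linear_combination (8 * ‖q‖ ^ 2) * htγ
    have a2 : 8 * γ * (γ * t * ⟪z, q⟫) = 4 * γ * ⟪z, q⟫ := by
      linear_combination (8 * γ * ⟪z, q⟫) * htγ
    have a3 : 8 * γ * (γ / 2 * t ^ 2 * ‖q‖ ^ 2) = ‖q‖ ^ 2 := by
      linear_combination (4 * ‖q‖ ^ 2) * ht2
    ring_nf at h a1 a2 a3 ⊢
    linarith [h, a1, a2, a3]
  have hiq2 : γ * ⟪z, q⟫ ≤ γ * (‖z‖ * ‖q‖) := mul_le_mul_of_nonneg_left hiq hγ.le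
  nlinarith [key', hiq2, sq_nonneg (‖q‖ - 2 * γ * ‖z‖)]
end
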